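/- Let A and B be n×n complex Hermitian positive semidefinite matrices with rank(A + B) > rank(A). Then det(2·I + γ·(A + B)) / det(I + γ·A) → +∞ as γ → +∞ (both determinants being positive reals for γ ≥ 0). -/

import Mathlib

open Finset Filter Matrix
open scoped ComplexOrder

private lemma det_smul_one_add_smul {n : ℕ} {M : Matrix (Fin n) (Fin n) ℂ} (hM : M.IsHermitian)
    (c γ : ℝ) :
    ((c : ℂ) • (1 : Matrix (Fin n) (Fin n) ℂ) + (γ : ℂ) • M).det
      = ∏ i, ((c + γ * hM.eigenvalues i : ℝ) : ℂ) := by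
  have hU : (hM.eigenvectorUnitary : Matrix (Fin n) (Fin n) ℂ) *
      star (hM.eigenvectorUnitary : Matrix (Fin n) (Fin n) ℂ) = 1 :=
    Matrix.mem_unitaryGroup_iff.mp hM.eigenvectorUnitary.2
  have key : (c : ℂ) • (1 : Matrix (Fin n) (Fin n) ℂ) + (γ : ℂ) • M
      = (hM.eigenvectorUnitary : Matrix (Fin n) (Fin n) ℂ)
        * diagonal (fun i => ((c + γ * hM.eigenvalues i : ℝ) : ℂ))
        * star (hM.eigenvectorUnitary : Matrix (Fin n) (Fin n) ℂ) := by
    conv_lhs => rw [hM.spectral_theorem, Unitary.conjStarAlgAut_apply]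
    have h2 : (γ : ℂ) • ((hM.eigenvectorUnitary : Matrix (Fin n) (Fin n) ℂ)
        * diagonal (RCLike.ofReal ∘ hM.eigenvalues)
        * star (hM.eigenvectorUnitary : Matrix (Fin n) (Fin n) ℂ))
        = (hM.eigenvectorUnitary : Matrix (Fin n) (Fin n) ℂ)
          * ((γ : ℂ) • diagonal (RCLike.ofReal ∘ hM.eigenvalues))
          * star (hM.eigenvectorUnitary : Matrix (Fin n) (Fin n) ℂ) := by
      rw [Matrix.mul_smul, Matrix.smul_mul]
    rw [h2]
    have h1 : (c : ℂ) • (1 : Matrix (Fin n) (Fin n) ℂ)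
        = (hM.eigenvectorUnitary : Matrix (Fin n) (Fin n) ℂ)
          * ((c : ℂ) • (1 : Matrix (Fin n) (Fin n) ℂ))
          * star (hM.eigenvectorUnitary : Matrix (Fin n) (Fin n) ℂ) := by
      rw [Matrix.mul_smul, Matrix.mul_one, Matrix.smul_mul, hU]
    rw [h1, ← Matrix.add_mul, ← Matrix.mul_add]
    congr 2
    ext i j
    by_cases h : i = j <;>
      simp [h, Matrix.diagonal, Matrix.one_apply, Complex.ofReal_add, Complex.ofReal_mul,
        mul_comm]
  rw [key, Matrix.det_mul_right_comm, hU, Matrix.one_mul, Matrix.det_diagonal]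

theorem stmt9 (n : ℕ) (A B : Matrix (Fin n) (Fin n) ℂ)
    (hA : A.PosSemidef) (hB : B.PosSemidef)
    (hrank : A.rank < (A + B).rank) :
    (∀ γ : ℝ, 0 ≤ γ →
      (∃ t : ℝ, 0 < t ∧
        ((2 : ℂ) • (1 : Matrix (Fin n) (Fin n) ℂ) + (γ : ℂ) • (A + B)).det = (t : ℂ)) ∧
      (∃ t : ℝ, 0 < t ∧
        ((1 : Matrix (Fin n) (Fin n) ℂ) + (γ : ℂ) • A).det = (t : ℂ))) ∧
    Tendsto (fun γ : ℝ =>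
        (((2 : ℂ) • (1 : Matrix (Fin n) (Fin n) ℂ) + (γ : ℂ) • (A + B)).det).re /
          (((1 : Matrix (Fin n) (Fin n) ℂ) + (γ : ℂ) • A).det).re)
      atTop atTop := by
  have hAB : (A + B).PosSemidef := hA.add hB
  set lam := hAB.1.eigenvalues with hlam
  set mu := hA.1.eigenvalues with hmu
  have hlam0 : ∀ i, 0 ≤ lam i := fun i => hAB.eigenvalues_nonneg i
  have hmu0 : ∀ i, 0 ≤ mu i := fun i => hA.eigenvalues_nonneg i
  -- determinant formulas
  have e1 : ∀ γ : ℝ, ((2 : ℂ) • (1 : Matrix (Fin n) (Fin n) ℂ) + (γ : ℂ) • (A + B)).det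
      = ((∏ i, (2 + γ * lam i) : ℝ) : ℂ) := by
    intro γ
    rw [show ((2 : ℂ)) = ((2 : ℝ) : ℂ) by norm_num, det_smul_one_add_smul hAB.1 2 γ,
      Complex.ofReal_prod]
  have e2 : ∀ γ : ℝ, ((1 : Matrix (Fin n) (Fin n) ℂ) + (γ : ℂ) • A).det
      = ((∏ i, (1 + γ * mu i) : ℝ) : ℂ) := by
    intro γ
    rw [show ((1 : Matrix (Fin n) (Fin n) ℂ)) = ((1 : ℝ) : ℂ) • 1 by norm_num,
      det_smul_one_add_smul hA.1 1 γ, Complex.ofReal_prod]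
  -- positivity
  have p1 : ∀ γ : ℝ, 0 ≤ γ → 0 < ∏ i, (2 + γ * lam i) := by
    intro γ hγ
    exact Finset.prod_pos fun i _ => by nlinarith [mul_nonneg hγ (hlam0 i)]
  have p2 : ∀ γ : ℝ, 0 ≤ γ → 0 < ∏ i, (1 + γ * mu i) := by
    intro γ hγ
    exact Finset.prod_pos fun i _ => by nlinarith [mul_nonneg hγ (hmu0 i)]
  refine ⟨fun γ hγ => ⟨⟨_, p1 γ hγ, e1 γ⟩, ⟨_, p2 γ hγ, e2 γ⟩⟩, ?_⟩
  -- reduce to products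
  have efun : (fun γ : ℝ =>
        (((2 : ℂ) • (1 : Matrix (Fin n) (Fin n) ℂ) + (γ : ℂ) • (A + B)).det).re /
          (((1 : Matrix (Fin n) (Fin n) ℂ) + (γ : ℂ) • A).det).re)
      = fun γ : ℝ => (∏ i, (2 + γ * lam i)) / (∏ i, (1 + γ * mu i)) := by
    funext γ
    rw [e1 γ, e2 γ, Complex.ofReal_re, Complex.ofReal_re]
  rw [efun]
  -- rank / cardinality
  set S : Finset (Fin n) := Finset.univ.filter (fun i => lam i ≠ 0) with hS
  set T : Finset (Fin n) := Finset.univ.filter (fun i => mu i ≠ 0) with hT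
  have hcard : T.card < S.card := by
    have h1 : (A + B).rank = S.card := by
      rw [hAB.1.rank_eq_card_non_zero_eigs, Fintype.card_subtype]
    have h2 : A.rank = T.card := by
      rw [hA.1.rank_eq_card_non_zero_eigs, Fintype.card_subtype]
    omega
  set P : ℝ := ∏ i ∈ S, lam i with hP
  set Q : ℝ := ∏ i ∈ T, (1 + mu i) with hQ
  have hPpos : 0 < P := Finset.prod_pos fun i hi => by
    have := (Finset.mem_filter.mp hi).2
    exact lt_of_le_of_ne (hlam0 i) (Ne.symm this)
  have hQpos : 0 < Q := Finset.prod_pos fun i _ => by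
    have := hmu0 i; linarith
  have key : ∀ᶠ γ : ℝ in atTop, (P / Q) * γ ≤
      (∏ i, (2 + γ * lam i)) / (∏ i, (1 + γ * mu i)) := by
    filter_upwards [eventually_ge_atTop (1 : ℝ)] with γ hγ1
    have hγ0 : (0 : ℝ) < γ := lt_of_lt_of_le one_pos hγ1
    -- lower bound on numerator
    have h1 : γ ^ S.card * P ≤ ∏ i, (2 + γ * lam i) := by
      have step1 : ∏ i ∈ S, (γ * lam i) ≤ ∏ i ∈ S, (2 + γ * lam i) :=
        Finset.prod_le_prod (fun i hi => by
            have := hlam0 i; positivity)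
          (fun i _ => by linarith)
      have step2 : ∏ i ∈ S, (2 + γ * lam i) ≤ ∏ i, (2 + γ * lam i) := by
        have hsd : (∏ i ∈ Finset.univ \ S, (2 + γ * lam i)) * ∏ i ∈ S, (2 + γ * lam i)
            = ∏ i, (2 + γ * lam i) := Finset.prod_sdiff (Finset.subset_univ S)
        have hone : (1 : ℝ) ≤ ∏ i ∈ Finset.univ \ S, (2 + γ * lam i) := by
          calc (1 : ℝ) = ∏ _i ∈ Finset.univ \ S, (1 : ℝ) := by simp
            _ ≤ _ := Finset.prod_le_prod (by simp)
                (fun i _ => by nlinarith [mul_nonneg (le_of_lt hγ0) (hlam0 i)])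
        rw [← hsd]
        exact le_mul_of_one_le_left
          (Finset.prod_nonneg fun i _ => by nlinarith [mul_nonneg (le_of_lt hγ0) (hlam0 i)])
          hone
      calc γ ^ S.card * P = ∏ i ∈ S, (γ * lam i) := by
            rw [Finset.prod_mul_distrib, Finset.prod_const]
        _ ≤ _ := le_trans step1 step2
    -- upper bound on denominator
    have h2 : (∏ i, (1 + γ * mu i)) ≤ γ ^ T.card * Q := by
      have heq : ∏ i, (1 + γ * mu i) = ∏ i ∈ T, (1 + γ * mu i) := by
        refine (Finset.prod_subset (Finset.subset_univ T) fun i _ hi => ?_).symm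
        have : mu i = 0 := by
          by_contra h
          exact hi (Finset.mem_filter.mpr ⟨Finset.mem_univ i, h⟩)
        simp [this]
      rw [heq]
      calc ∏ i ∈ T, (1 + γ * mu i) ≤ ∏ i ∈ T, (γ * (1 + mu i)) :=
            Finset.prod_le_prod (fun i _ => by nlinarith [hmu0 i])
              (fun i _ => by nlinarith [hmu0 i])
        _ = γ ^ T.card * Q := by rw [Finset.prod_mul_distrib, Finset.prod_const]
    have hgpos : 0 < ∏ i, (1 + γ * mu i) := p2 γ (le_of_lt hγ0)
    have hfnn : 0 ≤ ∏ i, (2 + γ * lam i) := le_of_lt (p1 γ (le_of_lt hγ0))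
    have hdiv : (γ ^ S.card * P) / (γ ^ T.card * Q) ≤
        (∏ i, (2 + γ * lam i)) / (∏ i, (1 + γ * mu i)) :=
      div_le_div₀ hfnn h1 hgpos h2
    refine le_trans ?_ hdiv
    have hrw : (γ ^ S.card * P) / (γ ^ T.card * Q)
        = γ ^ (S.card - T.card) * (P / Q) := by
      have hpow : γ ^ S.card = γ ^ (S.card - T.card) * γ ^ T.card := by
        rw [← pow_add]; congr 1; omega
      rw [hpow]
      field_simp
    rw [hrw, mul_comm (P / Q) γ]
    have : γ ≤ γ ^ (S.card - T.card) :=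
      le_self_pow₀ hγ1 (by omega)
    exact mul_le_mul_of_nonneg_right this (le_of_lt (div_pos hPpos hQpos))
  exact tendsto_atTop_mono' atTop key
    ((tendsto_id.const_mul_atTop (div_pos hPpos hQpos)))
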